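/- Work on a probability space with X a random element of a measurable space S, Y, A bounded real random variables, b, p : S → ℝ measurable with b(X) a version of E[Y | σ(X)] and p(X) a version of E[A | σ(X)], and b̂, p̂ : S → ℝ, z̄ : S → ℝᵏ bounded measurable with Ω := E[z̄(X) z̄(X)ᵀ] invertible. Let O₁, O₂, O₃, O₄ be i.i.d. copies of (Y, A, X) and set ε_{b,i} := Yᵢ − b̂(Xᵢ), ε_{p,i} := Aᵢ − p̂(Xᵢ). Then E[ ε_{b,1} z̄(X₁)ᵀ Ω⁻¹ z̄(X₂) ε_{b,2} · ε_{p,3} z̄(X₃)ᵀ Ω⁻¹ z̄(X₄) ε_{p,4} ] = ‖Π[b − b̂]‖² · ‖Π[p − p̂]‖², where Π is the orthogonal projection in L²(law of X) onto the span of z₁, …, z_k. Consequently, for n ≥ 4 i.i.d. copies, the fourth-order U-statistic ÎF₄₄ := ((n−4)!/n!) Σ_{i₁ ≠ i₂ ≠ i₃ ≠ i₄} ε_{b,i₁} z̄(X_{i₁})ᵀ Ω⁻¹ z̄(X_{i₂}) ε_{b,i₂} ε_{p,i₃} z̄(X_{i₃})ᵀ Ω⁻¹ z̄(X_{i₄})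 ε_{p,i₄} is unbiased for ‖Π[b − b̂]‖² ‖Π[p − p̂]‖². -/

import Mathlib

open MeasureTheory RealInnerProductSpace

lemma four_indep {Ω : Type*} [MeasurableSpace Ω] (P : Measure Ω) [IsProbabilityMeasure P]
    {n : ℕ} (i₁ i₂ i₃ i₄ : Fin n) (h12 : i₁ ≠ i₂) (h13 : i₁ ≠ i₃) (h14 : i₁ ≠ i₄)
    (h23 : i₂ ≠ i₃) (h24 : i₂ ≠ i₄) (h34 : i₃ ≠ i₄)
    (g₁ g₂ g₃ g₄ : Ω → ℝ) (hg₁ : Integrable g₁ P) (hg₂ : Integrable g₂ P)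
    (hg₃ : Integrable g₃ P) (hg₄ : Integrable g₄ P) :
    Integrable (fun ω : Fin n → Ω => g₁ (ω i₁) * g₂ (ω i₂) * g₃ (ω i₃) * g₄ (ω i₄))
      (Measure.pi fun _ => P) ∧
    ∫ ω : Fin n → Ω, g₁ (ω i₁) * g₂ (ω i₂) * g₃ (ω i₃) * g₄ (ω i₄) ∂(Measure.pi fun _ => P)
      = (∫ x, g₁ x ∂P) * (∫ x, g₂ x ∂P) * (∫ x, g₃ x ∂P) * (∫ x, g₄ x ∂P) := by
  letI : MeasureSpace Ω := ⟨P⟩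
  set F : Fin n → Ω → ℝ := fun i ω =>
    (if i = i₁ then g₁ ω else 1) * (if i = i₂ then g₂ ω else 1) *
      (if i = i₃ then g₃ ω else 1) * (if i = i₄ then g₄ ω else 1) with hF
  have hFprod : ∀ ω : Fin n → Ω,
      g₁ (ω i₁) * g₂ (ω i₂) * g₃ (ω i₃) * g₄ (ω i₄) = ∏ i, F i (ω i) := by
    intro ω
    simp only [hF, Finset.prod_mul_distrib, Finset.prod_ite_eq', Finset.mem_univ, if_true]
  have hFint : ∀ i, Integrable (F i) P := by
    intro i
    by_cases e1 : i = i₁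
    · subst e1; simpa [hF, h12, h13, h14] using hg₁
    by_cases e2 : i = i₂
    · subst e2; simpa [hF, e1, h23, h24] using hg₂
    by_cases e3 : i = i₃
    · subst e3; simpa [hF, e1, e2, h34] using hg₃
    by_cases e4 : i = i₄
    · subst e4; simpa [hF, e1, e2, e3] using hg₄
    · simpa [hF, e1, e2, e3, e4] using integrable_const (1 : ℝ)
  have hpi : (Measure.pi fun _ : Fin n => P) = (volume : Measure (Fin n → Ω)) :=
    (volume_pi).symm
  constructor
  · simp_rw [hFprod, hpi]
    exact Integrable.fintype_prod (f := F) hFint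
  · simp_rw [hFprod, hpi]
    rw [show ∫ x : Fin n → Ω, ∏ i, F i (x i) = ∏ i, ∫ x, F i x from
      integral_fintype_prod_eq_prod F]
    have hFi : ∀ i, (∫ x, F i x ∂P) =
        (if i = i₁ then ∫ x, g₁ x ∂P else 1) * (if i = i₂ then ∫ x, g₂ x ∂P else 1) *
          (if i = i₃ then ∫ x, g₃ x ∂P else 1) * (if i = i₄ then ∫ x, g₄ x ∂P else 1) := by
      intro i
      by_cases e1 : i = i₁
      · subst e1; simp [hF, h12, h13, h14]
      by_cases e2 : i = i₂
      · subst e2; simp [hF, e1, h23, h24]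
      by_cases e3 : i = i₃
      · subst e3; simp [hF, e1, e2, h34]
      by_cases e4 : i = i₄
      · subst e4; simp [hF, e1, e2, e3]
      · simp [hF, e1, e2, e3, e4]
    calc ∏ i, ∫ x, F i x ∂(volume : Measure Ω)
        = ∏ i, ((if i = i₁ then ∫ x, g₁ x ∂P else 1) * (if i = i₂ then ∫ x, g₂ x ∂P else 1) *
          (if i = i₃ then ∫ x, g₃ x ∂P else 1) * (if i = i₄ then ∫ x, g₄ x ∂P else 1)) :=
          Finset.prod_congr rfl fun i _ => hFi i
      _ = _ := by
          simp only [Finset.prod_mul_distrib, Finset.prod_ite_eq', Finset.mem_univ, if_true]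

lemma proj_norm_sq {E : Type*} [NormedAddCommGroup E] [InnerProductSpace ℝ E]
    {k : ℕ} (e : Fin k → E) (f : E) (G : Matrix (Fin k) (Fin k) ℝ)
    (hGe : ∀ i j, G i j = ⟪e i, e j⟫) (hGinv : IsUnit G)
    (K : Submodule ℝ E) (hK : K = Submodule.span ℝ (Set.range e)) [K.HasOrthogonalProjection]
    (v : Fin k → ℝ) (hv : ∀ j, v j = ⟪f, e j⟫) :
    ‖(K.orthogonalProjectionOnto f : E)‖ ^ 2 = ∑ a, ∑ c, v a * G⁻¹ a c * v c := by
  have hdet : IsUnit G.det := (Matrix.isUnit_iff_isUnit_det G).mp hGinv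
  have hGG : G * G⁻¹ = 1 := Matrix.mul_nonsing_inv G hdet
  have hGsymm : ∀ i j, G i j = G j i := by
    intro i j; rw [hGe, hGe, real_inner_comm]
  set u : E := ∑ a, (∑ c, G⁻¹ a c * v c) • e a with hu
  have hmem : u ∈ K := by
    rw [hK]
    exact Submodule.sum_mem _ fun a _ =>
      Submodule.smul_mem _ _ (Submodule.subset_span ⟨a, rfl⟩)
  have hue : ∀ j, ⟪u, e j⟫ = v j := by
    intro j
    rw [hu, sum_inner]
    simp only [real_inner_smul_left]
    calc ∑ a, (∑ c, G⁻¹ a c * v c) * ⟪e a, e j⟫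
        = ∑ a, ∑ c, G⁻¹ a c * v c * ⟪e a, e j⟫ := by
          simp only [Finset.sum_mul]
      _ = ∑ c, ∑ a, G⁻¹ a c * v c * ⟪e a, e j⟫ := Finset.sum_comm
      _ = ∑ c, (∑ a, G j a * G⁻¹ a c) * v c := by
          refine Finset.sum_congr rfl fun c _ => ?_
          rw [Finset.sum_mul]
          refine Finset.sum_congr rfl fun a _ => ?_
          rw [← hGe, hGsymm a j]; ring
      _ = ∑ c, (1 : Matrix (Fin k) (Fin k) ℝ) j c * v c := by
          refine Finset.sum_congr rfl fun c _ => ?_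
          rw [← Matrix.mul_apply, hGG]
      _ = v j := by simp [Matrix.one_apply]
  have hproj : (K.orthogonalProjectionOnto f : E) = u := by
    refine Submodule.eq_starProjection_of_mem_of_inner_eq_zero hmem ?_
    intro w hw
    rw [hK] at hw
    induction hw using Submodule.span_induction with
    | mem x hx =>
        obtain ⟨j, rfl⟩ := hx
        rw [inner_sub_left, hue, ← hv, sub_self]
    | zero => rw [inner_zero_right]
    | add x y _ _ hx hy => rw [inner_add_right, hx, hy, add_zero]
    | smul r x _ hx => rw [real_inner_smul_right, hx, mul_zero]
  rw [hproj, ← real_inner_self_eq_norm_sq, hu]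
  rw [sum_inner]
  simp only [real_inner_smul_left]
  calc ∑ a, (∑ c, G⁻¹ a c * v c) * ⟪e a, u⟫
      = ∑ a, (∑ c, G⁻¹ a c * v c) * v a := by
        refine Finset.sum_congr rfl fun a _ => ?_
        rw [real_inner_comm, hue]
    _ = ∑ a, ∑ c, v a * G⁻¹ a c * v c := by
        refine Finset.sum_congr rfl fun a _ => ?_
        rw [Finset.sum_mul]
        exact Finset.sum_congr rfl fun c _ => by ring

lemma count_sum {n : ℕ} (T : ℝ) :
    (∑ i₁ : Fin n, ∑ i₂ : Fin n, ∑ i₃ : Fin n, ∑ i₄ : Fin n,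
      (if i₁ ≠ i₂ ∧ i₁ ≠ i₃ ∧ i₁ ≠ i₄ ∧ i₂ ≠ i₃ ∧ i₂ ≠ i₄ ∧ i₃ ≠ i₄ then T else 0))
    = ((n * (n - 1) * (n - 2) * (n - 3) : ℕ) : ℝ) * T := by
  have key : ∀ (s : Finset (Fin n)) (T : ℝ),
      (∑ i : Fin n, if i ∉ s then T else 0) = ((n - s.card : ℕ) : ℝ) * T := by
    intro s T
    rw [← Finset.sum_filter, Finset.sum_const, nsmul_eq_mul]
    congr 1
    rw [Finset.filter_not, Finset.filter_mem_eq_inter, Finset.univ_inter,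
      ← Finset.compl_eq_univ_sdiff, Finset.card_compl, Fintype.card_fin]
  have step4 : ∀ (i₁ i₂ i₃ : Fin n), i₁ ≠ i₂ → i₁ ≠ i₃ → i₂ ≠ i₃ →
      (∑ i₄ : Fin n, if i₁ ≠ i₂ ∧ i₁ ≠ i₃ ∧ i₁ ≠ i₄ ∧ i₂ ≠ i₃ ∧ i₂ ≠ i₄ ∧ i₃ ≠ i₄ then T else 0)
        = ((n - 3 : ℕ) : ℝ) * T := by
    intro i₁ i₂ i₃ h12 h13 h23
    have card3 : ({i₁, i₂, i₃} : Finset (Fin n)).card = 3 := by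
      rw [Finset.card_insert_of_notMem (by simp [h12, h13]),
        Finset.card_insert_of_notMem (by simp [h23]), Finset.card_singleton]
    calc (∑ i₄ : Fin n, if i₁ ≠ i₂ ∧ i₁ ≠ i₃ ∧ i₁ ≠ i₄ ∧ i₂ ≠ i₃ ∧ i₂ ≠ i₄ ∧ i₃ ≠ i₄
            then T else 0)
        = ∑ i₄ : Fin n, if i₄ ∉ ({i₁, i₂, i₃} : Finset (Fin n)) then T else 0 := by
          refine Finset.sum_congr rfl fun i₄ _ => ?_
          refine if_congr ?_ rfl rfl
          simp only [Finset.mem_insert, Finset.mem_singleton, not_or]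
          constructor
          · rintro ⟨-, -, h1, -, h2, h3⟩; exact ⟨Ne.symm h1, Ne.symm h2, Ne.symm h3⟩
          · rintro ⟨h1, h2, h3⟩; exact ⟨h12, h13, Ne.symm h1, h23, Ne.symm h2, Ne.symm h3⟩
      _ = ((n - 3 : ℕ) : ℝ) * T := by rw [key, card3]
  have step3 : ∀ (i₁ i₂ : Fin n), i₁ ≠ i₂ →
      (∑ i₃ : Fin n, if i₁ ≠ i₃ ∧ i₂ ≠ i₃ then ((n - 3 : ℕ) : ℝ) * T else 0)
        = ((n - 2 : ℕ) : ℝ) * (((n - 3 : ℕ) : ℝ) * T) := by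
    intro i₁ i₂ h12
    have card2 : ({i₁, i₂} : Finset (Fin n)).card = 2 := by
      rw [Finset.card_insert_of_notMem (by simp [h12]), Finset.card_singleton]
    calc (∑ i₃ : Fin n, if i₁ ≠ i₃ ∧ i₂ ≠ i₃ then ((n - 3 : ℕ) : ℝ) * T else 0)
        = ∑ i₃ : Fin n, if i₃ ∉ ({i₁, i₂} : Finset (Fin n)) then ((n - 3 : ℕ) : ℝ) * T else 0 := by
          refine Finset.sum_congr rfl fun i₃ _ => ?_
          refine if_congr ?_ rfl rfl
          simp only [Finset.mem_insert, Finset.mem_singleton, not_or]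
          exact ⟨fun ⟨h1, h2⟩ => ⟨Ne.symm h1, Ne.symm h2⟩, fun ⟨h1, h2⟩ => ⟨Ne.symm h1, Ne.symm h2⟩⟩
      _ = _ := by rw [key, card2]
  have step2 :
      (∑ i₁ : Fin n, ∑ i₂ : Fin n, if i₁ ≠ i₂ then
          ((n - 2 : ℕ) : ℝ) * (((n - 3 : ℕ) : ℝ) * T) else 0)
        = (n : ℝ) * (((n - 1 : ℕ) : ℝ) * (((n - 2 : ℕ) : ℝ) * (((n - 3 : ℕ) : ℝ) * T))) := by
    have : ∀ i₁ : Fin n, (∑ i₂ : Fin n, if i₁ ≠ i₂ then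
        ((n - 2 : ℕ) : ℝ) * (((n - 3 : ℕ) : ℝ) * T) else 0)
        = ((n - 1 : ℕ) : ℝ) * (((n - 2 : ℕ) : ℝ) * (((n - 3 : ℕ) : ℝ) * T)) := by
      intro i₁
      calc (∑ i₂ : Fin n, if i₁ ≠ i₂ then ((n - 2 : ℕ) : ℝ) * (((n - 3 : ℕ) : ℝ) * T) else 0)
          = ∑ i₂ : Fin n, if i₂ ∉ ({i₁} : Finset (Fin n)) then
              ((n - 2 : ℕ) : ℝ) * (((n - 3 : ℕ) : ℝ) * T) else 0 := by
            refine Finset.sum_congr rfl fun i₂ _ => ?_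
            refine if_congr ?_ rfl rfl
            simp [ne_comm]
        _ = _ := by rw [key, Finset.card_singleton]
    rw [Finset.sum_congr rfl fun i₁ _ => this i₁, Finset.sum_const, Finset.card_univ,
      Fintype.card_fin, nsmul_eq_mul]
  calc (∑ i₁ : Fin n, ∑ i₂ : Fin n, ∑ i₃ : Fin n, ∑ i₄ : Fin n,
      (if i₁ ≠ i₂ ∧ i₁ ≠ i₃ ∧ i₁ ≠ i₄ ∧ i₂ ≠ i₃ ∧ i₂ ≠ i₄ ∧ i₃ ≠ i₄ then T else 0))
      = ∑ i₁ : Fin n, ∑ i₂ : Fin n, if i₁ ≠ i₂ then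
          ((n - 2 : ℕ) : ℝ) * (((n - 3 : ℕ) : ℝ) * T) else 0 := by
        refine Finset.sum_congr rfl fun i₁ _ => Finset.sum_congr rfl fun i₂ _ => ?_
        by_cases h12 : i₁ ≠ i₂
        · rw [if_pos h12]
          calc (∑ i₃ : Fin n, ∑ i₄ : Fin n,
              (if i₁ ≠ i₂ ∧ i₁ ≠ i₃ ∧ i₁ ≠ i₄ ∧ i₂ ≠ i₃ ∧ i₂ ≠ i₄ ∧ i₃ ≠ i₄ then T else 0))
              = ∑ i₃ : Fin n, if i₁ ≠ i₃ ∧ i₂ ≠ i₃ then ((n - 3 : ℕ) : ℝ) * T else 0 := by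
                refine Finset.sum_congr rfl fun i₃ _ => ?_
                by_cases h3 : i₁ ≠ i₃ ∧ i₂ ≠ i₃
                · rw [if_pos h3, step4 i₁ i₂ i₃ h12 h3.1 h3.2]
                · rw [if_neg h3]
                  refine Finset.sum_eq_zero fun i₄ _ => ?_
                  rw [if_neg]; tauto
            _ = _ := step3 i₁ i₂ h12
        · rw [if_neg h12]
          refine Finset.sum_eq_zero fun i₃ _ => Finset.sum_eq_zero fun i₄ _ => ?_
          rw [if_neg]; tauto
    _ = (n : ℝ) * (((n - 1 : ℕ) : ℝ) * (((n - 2 : ℕ) : ℝ) * (((n - 3 : ℕ) : ℝ) * T))) := step2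
    _ = ((n * (n - 1) * (n - 2) * (n - 3) : ℕ) : ℝ) * T := by push_cast; ring
/-- Unbiasedness of the fourth-order influence function statistic (Theorem `thm:foif`(i)):
with `ε_{b,i} = Yᵢ - b̂(Xᵢ)`, `ε_{p,i} = Aᵢ - p̂(Xᵢ)` and i.i.d. copies,
`E[ε_{b,1} z̄(X₁)ᵀΩ⁻¹z̄(X₂) ε_{b,2} · ε_{p,3} z̄(X₃)ᵀΩ⁻¹z̄(X₄) ε_{p,4}]
  = ‖Π(b - b̂)‖² ‖Π(p - p̂)‖²` (projection in `L²(law of X)` onto the span of the basis),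
and consequently the fourth-order U-statistic `ÎF₄₄` over `n ≥ 4` i.i.d. copies is unbiased
for `‖Π(b - b̂)‖² ‖Π(p - p̂)‖²`. -/
theorem stmt12 {Ω S : Type*} [MeasurableSpace Ω] [MeasurableSpace S]
    (P : Measure Ω) [IsProbabilityMeasure P]
    (X : Ω → S) (hX : Measurable X)
    (Y A : Ω → ℝ) (hY : Measurable Y) (hA : Measurable A)
    (C : ℝ) (hYb : ∀ ω, |Y ω| ≤ C) (hAb : ∀ ω, |A ω| ≤ C)
    (b p bh ph : S → ℝ) (hb : Measurable b) (hp : Measurable p)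
    (hbh : Measurable bh) (hph : Measurable ph)
    (hbhB : ∀ s, |bh s| ≤ C) (hphB : ∀ s, |ph s| ≤ C)
    (hbX : (fun ω => b (X ω)) =ᵐ[P] P[Y | MeasurableSpace.comap X inferInstance])
    (hpX : (fun ω => p (X ω)) =ᵐ[P] P[A | MeasurableSpace.comap X inferInstance])
    {k : ℕ} (z : S → Fin k → ℝ) (hz : ∀ j, Measurable fun s => z s j)
    (hzB : ∀ s j, |z s j| ≤ C)
    (G : Matrix (Fin k) (Fin k) ℝ)
    (hG : ∀ i j, G i j = ∫ ω, z (X ω) i * z (X ω) j ∂P)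
    (hGinv : IsUnit G)
    (hfb : MemLp (fun s => b s - bh s) 2 (P.map X))
    (hfp : MemLp (fun s => p s - ph s) 2 (P.map X))
    (hzL : ∀ j, MemLp (fun s => z s j) 2 (P.map X))
    (K : Submodule ℝ (Lp ℝ 2 (P.map X)))
    (hK : K = Submodule.span ℝ (Set.range fun j : Fin k => MemLp.toLp _ (hzL j)))
    [K.HasOrthogonalProjection] :
    ((∫ ω : Fin 4 → Ω,
        (Y (ω 0) - bh (X (ω 0))) *
          (∑ a, ∑ c, z (X (ω 0)) a * G⁻¹ a c * z (X (ω 1)) c) *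
          (Y (ω 1) - bh (X (ω 1))) *
          ((A (ω 2) - ph (X (ω 2))) *
            (∑ a, ∑ c, z (X (ω 2)) a * G⁻¹ a c * z (X (ω 3)) c) *
            (A (ω 3) - ph (X (ω 3))))
        ∂(Measure.pi fun _ : Fin 4 => P))
      = ‖(K.orthogonalProjectionOnto (MemLp.toLp _ hfb) : Lp ℝ 2 (P.map X))‖ ^ 2 *
          ‖(K.orthogonalProjectionOnto (MemLp.toLp _ hfp) : Lp ℝ 2 (P.map X))‖ ^ 2)
    ∧ ∀ n : ℕ, 4 ≤ n →
        (∫ ω : Fin n → Ω,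
            ((Nat.factorial (n - 4) : ℝ) / (Nat.factorial n : ℝ)) *
              ∑ i₁ : Fin n, ∑ i₂ : Fin n, ∑ i₃ : Fin n, ∑ i₄ : Fin n,
                (if i₁ ≠ i₂ ∧ i₁ ≠ i₃ ∧ i₁ ≠ i₄ ∧ i₂ ≠ i₃ ∧ i₂ ≠ i₄ ∧ i₃ ≠ i₄ then
                  (Y (ω i₁) - bh (X (ω i₁))) *
                    (∑ a, ∑ c, z (X (ω i₁)) a * G⁻¹ a c * z (X (ω i₂)) c) *
                    (Y (ω i₂) - bh (X (ω i₂))) *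
                    ((A (ω i₃) - ph (X (ω i₃))) *
                      (∑ a, ∑ c, z (X (ω i₃)) a * G⁻¹ a c * z (X (ω i₄)) c) *
                      (A (ω i₄) - ph (X (ω i₄))))
                else 0)
            ∂(Measure.pi fun _ : Fin n => P))
          = ‖(K.orthogonalProjectionOnto (MemLp.toLp _ hfb) : Lp ℝ 2 (P.map X))‖ ^ 2 *
              ‖(K.orthogonalProjectionOnto (MemLp.toLp _ hfp) : Lp ℝ 2 (P.map X))‖ ^ 2 := by

  -- setup
  classical
  have hm : MeasurableSpace.comap X inferInstance ≤ ‹MeasurableSpace Ω› := hX.comap_le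
  haveI : SigmaFinite (P.trim hm) := inferInstance
  -- basic integrability helper
  have hInt : ∀ (g : Ω → ℝ) (M : ℝ), Measurable g → (∀ ω, |g ω| ≤ M) → Integrable g P := by
    intro g M hg hM
    refine (integrable_const M).mono' hg.aestronglyMeasurable (ae_of_all _ fun ω => ?_)
    simpa [Real.norm_eq_abs] using hM ω
  -- the single-coordinate factors
  set h : Fin k → Ω → ℝ := fun a ω => (Y ω - bh (X ω)) * z (X ω) a with hh
  set q : Fin k → Ω → ℝ := fun a ω => (A ω - ph (X ω)) * z (X ω) a with hq
  have hIh : ∀ a, Integrable (h a) P := by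
    intro a
    refine hInt _ ((|C| + |C|) * |C|) ((hY.sub (hbh.comp hX)).mul ((hz a).comp hX)) fun ω => ?_
    rw [hh]
    rw [abs_mul]
    refine mul_le_mul ?_ ((hzB _ a).trans (le_abs_self C)) (abs_nonneg _) (by positivity)
    exact (abs_sub _ _).trans
      (add_le_add ((hYb ω).trans (le_abs_self C)) ((hbhB _).trans (le_abs_self C)))
  have hIq : ∀ a, Integrable (q a) P := by
    intro a
    refine hInt _ ((|C| + |C|) * |C|) ((hA.sub (hph.comp hX)).mul ((hz a).comp hX)) fun ω => ?_
    rw [hq]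
    rw [abs_mul]
    refine mul_le_mul ?_ ((hzB _ a).trans (le_abs_self C)) (abs_nonneg _) (by positivity)
    exact (abs_sub _ _).trans
      (add_le_add ((hAb ω).trans (le_abs_self C)) ((hphB _).trans (le_abs_self C)))
  set v : Fin k → ℝ := fun a => ∫ x, h a x ∂P with hv
  set w : Fin k → ℝ := fun a => ∫ x, q a x ∂P with hw
  -- bilinear kernel expansion
  have B : ∀ ω₁ ω₂ : Ω,
      (Y ω₁ - bh (X ω₁)) * (∑ a, ∑ c, z (X ω₁) a * G⁻¹ a c * z (X ω₂) c) * (Y ω₂ - bh (X ω₂))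
        = ∑ a, ∑ c, G⁻¹ a c * (h a ω₁ * h c ω₂) := by
    intro ω₁ ω₂
    simp only [Finset.mul_sum, Finset.sum_mul, hh]
    exact Finset.sum_congr rfl fun a _ => Finset.sum_congr rfl fun c _ => by ring
  have Bq : ∀ ω₁ ω₂ : Ω,
      (A ω₁ - ph (X ω₁)) * (∑ a, ∑ c, z (X ω₁) a * G⁻¹ a c * z (X ω₂) c) * (A ω₂ - ph (X ω₂))
        = ∑ a, ∑ c, G⁻¹ a c * (q a ω₁ * q c ω₂) := by
    intro ω₁ ω₂
    simp only [Finset.mul_sum, Finset.sum_mul, hq]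
    exact Finset.sum_congr rfl fun a _ => Finset.sum_congr rfl fun c _ => by ring
  -- main computation for one distinct quadruple
  have main : ∀ (n : ℕ) (i₁ i₂ i₃ i₄ : Fin n), i₁ ≠ i₂ → i₁ ≠ i₃ → i₁ ≠ i₄ → i₂ ≠ i₃ →
      i₂ ≠ i₄ → i₃ ≠ i₄ →
      Integrable (fun ω : Fin n → Ω =>
        (Y (ω i₁) - bh (X (ω i₁))) *
          (∑ a, ∑ c, z (X (ω i₁)) a * G⁻¹ a c * z (X (ω i₂)) c) *
          (Y (ω i₂) - bh (X (ω i₂))) *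
          ((A (ω i₃) - ph (X (ω i₃))) *
            (∑ a, ∑ c, z (X (ω i₃)) a * G⁻¹ a c * z (X (ω i₄)) c) *
            (A (ω i₄) - ph (X (ω i₄))))) (Measure.pi fun _ => P) ∧
      (∫ ω : Fin n → Ω,
        (Y (ω i₁) - bh (X (ω i₁))) *
          (∑ a, ∑ c, z (X (ω i₁)) a * G⁻¹ a c * z (X (ω i₂)) c) *
          (Y (ω i₂) - bh (X (ω i₂))) *
          ((A (ω i₃) - ph (X (ω i₃))) *
            (∑ a, ∑ c, z (X (ω i₃)) a * G⁻¹ a c * z (X (ω i₄)) c) *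
            (A (ω i₄) - ph (X (ω i₄))))
        ∂(Measure.pi fun _ : Fin n => P))
        = (∑ a, ∑ c, v a * G⁻¹ a c * v c) * (∑ a, ∑ c, w a * G⁻¹ a c * w c) := by
    intro n i₁ i₂ i₃ i₄ h12 h13 h14 h23 h24 h34
    have expand : ∀ ω : Fin n → Ω,
        (Y (ω i₁) - bh (X (ω i₁))) *
          (∑ a, ∑ c, z (X (ω i₁)) a * G⁻¹ a c * z (X (ω i₂)) c) *
          (Y (ω i₂) - bh (X (ω i₂))) *
          ((A (ω i₃) - ph (X (ω i₃))) *
            (∑ a, ∑ c, z (X (ω i₃)) a * G⁻¹ a c * z (X (ω i₄)) c) *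
            (A (ω i₄) - ph (X (ω i₄))))
          = ∑ a, ∑ c, ∑ d, ∑ e, (G⁻¹ a c * G⁻¹ d e) *
              (h a (ω i₁) * h c (ω i₂) * q d (ω i₃) * q e (ω i₄)) := by
      intro ω
      rw [B (ω i₁) (ω i₂), Bq (ω i₃) (ω i₄)]
      rw [Finset.sum_mul]
      refine Finset.sum_congr rfl fun a _ => ?_
      rw [Finset.sum_mul]
      refine Finset.sum_congr rfl fun c _ => ?_
      rw [Finset.mul_sum]
      refine Finset.sum_congr rfl fun d _ => ?_
      rw [Finset.mul_sum]
      exact Finset.sum_congr rfl fun e _ => by ring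
    have hfour := fun a c d e => four_indep P i₁ i₂ i₃ i₄ h12 h13 h14 h23 h24 h34
      (h a) (h c) (q d) (q e) (hIh a) (hIh c) (hIq d) (hIq e)
    constructor
    · rw [show (fun ω : Fin n → Ω =>
        (Y (ω i₁) - bh (X (ω i₁))) *
          (∑ a, ∑ c, z (X (ω i₁)) a * G⁻¹ a c * z (X (ω i₂)) c) *
          (Y (ω i₂) - bh (X (ω i₂))) *
          ((A (ω i₃) - ph (X (ω i₃))) *
            (∑ a, ∑ c, z (X (ω i₃)) a * G⁻¹ a c * z (X (ω i₄)) c) *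
            (A (ω i₄) - ph (X (ω i₄))))) = fun ω => ∑ a, ∑ c, ∑ d, ∑ e,
              (G⁻¹ a c * G⁻¹ d e) * (h a (ω i₁) * h c (ω i₂) * q d (ω i₃) * q e (ω i₄))
          from funext expand]
      exact integrable_finset_sum _ fun a _ => integrable_finset_sum _ fun c _ =>
        integrable_finset_sum _ fun d _ => integrable_finset_sum _ fun e _ =>
          ((hfour a c d e).1.const_mul _)
    · rw [integral_congr_ae (ae_of_all _ expand)]
      rw [integral_finset_sum _ fun a _ => integrable_finset_sum _ fun c _ =>
        integrable_finset_sum _ fun d _ => integrable_finset_sum _ fun e _ =>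
          ((hfour a c d e).1.const_mul _)]
      calc (∑ a, ∫ ω : Fin n → Ω, ∑ c, ∑ d, ∑ e, (G⁻¹ a c * G⁻¹ d e) *
              (h a (ω i₁) * h c (ω i₂) * q d (ω i₃) * q e (ω i₄))
            ∂(Measure.pi fun _ : Fin n => P))
          = ∑ a, ∑ c, ∑ d, ∑ e, (G⁻¹ a c * G⁻¹ d e) * (v a * v c * w d * w e) := by
            refine Finset.sum_congr rfl fun a _ => ?_
            rw [integral_finset_sum _ fun c _ => integrable_finset_sum _ fun d _ =>
              integrable_finset_sum _ fun e _ => ((hfour a c d e).1.const_mul _)]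
            refine Finset.sum_congr rfl fun c _ => ?_
            rw [integral_finset_sum _ fun d _ => integrable_finset_sum _ fun e _ =>
              ((hfour a c d e).1.const_mul _)]
            refine Finset.sum_congr rfl fun d _ => ?_
            rw [integral_finset_sum _ fun e _ => ((hfour a c d e).1.const_mul _)]
            refine Finset.sum_congr rfl fun e _ => ?_
            rw [integral_const_mul, (hfour a c d e).2]
        _ = ∑ a, ∑ c, (v a * G⁻¹ a c * v c) * (∑ d, ∑ e, w d * G⁻¹ d e * w e) := by
            refine Finset.sum_congr rfl fun a _ => Finset.sum_congr rfl fun c _ => ?_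
            rw [Finset.mul_sum]
            refine Finset.sum_congr rfl fun d _ => ?_
            rw [Finset.mul_sum]
            exact Finset.sum_congr rfl fun e _ => by ring
        _ = (∑ a, ∑ c, v a * G⁻¹ a c * v c) * (∑ a, ∑ c, w a * G⁻¹ a c * w c) := by
            simp only [← Finset.sum_mul]
  -- L² objects
  set e : Fin k → Lp ℝ 2 (P.map X) := fun j => MemLp.toLp _ (hzL j) with he
  have hGe : ∀ i j, G i j = ⟪e i, e j⟫ := by
    intro i j
    rw [hG i j,
      show ∫ ω, z (X ω) i * z (X ω) j ∂P = ∫ s, z s i * z s j ∂(P.map X) from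
        (integral_map hX.aemeasurable ((hz i).mul (hz j)).aestronglyMeasurable).symm,
      L2.inner_def]
    refine integral_congr_ae ?_
    filter_upwards [MemLp.coeFn_toLp (hzL i), MemLp.coeFn_toLp (hzL j)] with s h1 h2
    simp [he, h1, h2, RCLike.inner_apply, mul_comm]
  have hva : ∀ a, v a = ⟪(MemLp.toLp _ hfb : Lp ℝ 2 (P.map X)), e a⟫ := by
    intro a
    have hζm : StronglyMeasurable[MeasurableSpace.comap X inferInstance]
        fun ω => z (X ω) a :=
      ((hz a).comp (Measurable.of_comap_le le_rfl)).stronglyMeasurable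
    have hIzY : Integrable (fun ω => z (X ω) a * Y ω) P :=
      hInt _ (|C| * |C|) (((hz a).comp hX).mul hY) fun ω => by
        rw [abs_mul]
        exact mul_le_mul ((hzB _ a).trans (le_abs_self C)) ((hYb ω).trans (le_abs_self C))
          (abs_nonneg _) (abs_nonneg _)
    have hIY : Integrable Y P := hInt _ |C| hY fun ω => (hYb ω).trans (le_abs_self C)
    have hIbhz : Integrable (fun ω => bh (X ω) * z (X ω) a) P :=
      hInt _ (|C| * |C|) ((hbh.comp hX).mul ((hz a).comp hX)) fun ω => by
        rw [abs_mul]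
        exact mul_le_mul ((hbhB _).trans (le_abs_self C)) ((hzB _ a).trans (le_abs_self C))
          (abs_nonneg _) (abs_nonneg _)
    have hmul := condExp_mul_of_stronglyMeasurable_left (μ := P) hζm hIzY hIY
    have key1 : ∫ ω, z (X ω) a * Y ω ∂P = ∫ ω, z (X ω) a * b (X ω) ∂P := by
      rw [show ∫ ω, z (X ω) a * Y ω ∂P
          = ∫ ω, (P[(fun ω => z (X ω) a) * Y | MeasurableSpace.comap X inferInstance]) ω ∂P from
        (integral_condExp hm).symm]
      refine integral_congr_ae ?_
      filter_upwards [hmul, hbX] with ω h1 h2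
      rw [h1, Pi.mul_apply, ← h2]
    have hIbz : Integrable (fun ω => b (X ω) * z (X ω) a) P := by
      have h3 : Integrable
          (fun ω => z (X ω) a * (P[Y | MeasurableSpace.comap X inferInstance]) ω) P :=
        integrable_condExp.bdd_mul (c := |C|) ((hz a).comp hX).aestronglyMeasurable
          (ae_of_all _ fun ω => by simpa [Real.norm_eq_abs] using (hzB (X ω) a).trans (le_abs_self C))
      refine h3.congr ?_
      filter_upwards [hbX] with ω h2
      rw [← h2]; ring
    have step1 : v a = ∫ ω, (b (X ω) - bh (X ω)) * z (X ω) a ∂P := by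
      calc v a = ∫ ω, (z (X ω) a * Y ω - bh (X ω) * z (X ω) a) ∂P := by
            rw [hv]
            refine integral_congr_ae (ae_of_all _ fun ω => ?_)
            rw [hh]; ring
        _ = ∫ ω, z (X ω) a * Y ω ∂P - ∫ ω, bh (X ω) * z (X ω) a ∂P :=
            integral_sub hIzY hIbhz
        _ = ∫ ω, z (X ω) a * b (X ω) ∂P - ∫ ω, bh (X ω) * z (X ω) a ∂P := by rw [key1]
        _ = ∫ ω, b (X ω) * z (X ω) a ∂P - ∫ ω, bh (X ω) * z (X ω) a ∂P := by
            congr 1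
            exact integral_congr_ae (ae_of_all _ fun ω => by ring)
        _ = ∫ ω, (b (X ω) * z (X ω) a - bh (X ω) * z (X ω) a) ∂P :=
            (integral_sub hIbz hIbhz).symm
        _ = ∫ ω, (b (X ω) - bh (X ω)) * z (X ω) a ∂P :=
            integral_congr_ae (ae_of_all _ fun ω => by ring)
    have step2 : ∫ ω, (b (X ω) - bh (X ω)) * z (X ω) a ∂P
        = ∫ s, (b s - bh s) * z s a ∂(P.map X) :=
      (integral_map hX.aemeasurable ((hb.sub hbh).mul (hz a)).aestronglyMeasurable).symm
    have step3 : ⟪(MemLp.toLp _ hfb : Lp ℝ 2 (P.map X)), e a⟫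
        = ∫ s, (b s - bh s) * z s a ∂(P.map X) := by
      rw [L2.inner_def]
      refine integral_congr_ae ?_
      filter_upwards [MemLp.coeFn_toLp hfb, MemLp.coeFn_toLp (hzL a)] with s h1 h2
      simp [he, h1, h2, RCLike.inner_apply, mul_comm]
    exact step1.trans (step2.trans step3.symm)
  have hwa : ∀ a, w a = ⟪(MemLp.toLp _ hfp : Lp ℝ 2 (P.map X)), e a⟫ := by
    intro a
    have hζm : StronglyMeasurable[MeasurableSpace.comap X inferInstance]
        fun ω => z (X ω) a :=
      ((hz a).comp (Measurable.of_comap_le le_rfl)).stronglyMeasurable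
    have hIzY : Integrable (fun ω => z (X ω) a * A ω) P :=
      hInt _ (|C| * |C|) (((hz a).comp hX).mul hA) fun ω => by
        rw [abs_mul]
        exact mul_le_mul ((hzB _ a).trans (le_abs_self C)) ((hAb ω).trans (le_abs_self C))
          (abs_nonneg _) (abs_nonneg _)
    have hIY : Integrable A P := hInt _ |C| hA fun ω => (hAb ω).trans (le_abs_self C)
    have hIbhz : Integrable (fun ω => ph (X ω) * z (X ω) a) P :=
      hInt _ (|C| * |C|) ((hph.comp hX).mul ((hz a).comp hX)) fun ω => by
        rw [abs_mul]
        exact mul_le_mul ((hphB _).trans (le_abs_self C)) ((hzB _ a).trans (le_abs_self C))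
          (abs_nonneg _) (abs_nonneg _)
    have hmul := condExp_mul_of_stronglyMeasurable_left (μ := P) hζm hIzY hIY
    have key1 : ∫ ω, z (X ω) a * A ω ∂P = ∫ ω, z (X ω) a * p (X ω) ∂P := by
      rw [show ∫ ω, z (X ω) a * A ω ∂P
          = ∫ ω, (P[(fun ω => z (X ω) a) * A | MeasurableSpace.comap X inferInstance]) ω ∂P from
        (integral_condExp hm).symm]
      refine integral_congr_ae ?_
      filter_upwards [hmul, hpX] with ω h1 h2
      rw [h1, Pi.mul_apply, ← h2]
    have hIbz : Integrable (fun ω => p (X ω) * z (X ω) a) P := by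
      have h3 : Integrable
          (fun ω => z (X ω) a * (P[A | MeasurableSpace.comap X inferInstance]) ω) P :=
        integrable_condExp.bdd_mul (c := |C|) ((hz a).comp hX).aestronglyMeasurable
          (ae_of_all _ fun ω => by simpa [Real.norm_eq_abs] using (hzB (X ω) a).trans (le_abs_self C))
      refine h3.congr ?_
      filter_upwards [hpX] with ω h2
      rw [← h2]; ring
    have step1 : w a = ∫ ω, (p (X ω) - ph (X ω)) * z (X ω) a ∂P := by
      calc w a = ∫ ω, (z (X ω) a * A ω - ph (X ω) * z (X ω) a) ∂P := by
            rw [hw]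
            refine integral_congr_ae (ae_of_all _ fun ω => ?_)
            rw [hq]; ring
        _ = ∫ ω, z (X ω) a * A ω ∂P - ∫ ω, ph (X ω) * z (X ω) a ∂P :=
            integral_sub hIzY hIbhz
        _ = ∫ ω, z (X ω) a * p (X ω) ∂P - ∫ ω, ph (X ω) * z (X ω) a ∂P := by rw [key1]
        _ = ∫ ω, p (X ω) * z (X ω) a ∂P - ∫ ω, ph (X ω) * z (X ω) a ∂P := by
            congr 1
            exact integral_congr_ae (ae_of_all _ fun ω => by ring)
        _ = ∫ ω, (p (X ω) * z (X ω) a - ph (X ω) * z (X ω) a) ∂P :=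
            (integral_sub hIbz hIbhz).symm
        _ = ∫ ω, (p (X ω) - ph (X ω)) * z (X ω) a ∂P :=
            integral_congr_ae (ae_of_all _ fun ω => by ring)
    have step2 : ∫ ω, (p (X ω) - ph (X ω)) * z (X ω) a ∂P
        = ∫ s, (p s - ph s) * z s a ∂(P.map X) :=
      (integral_map hX.aemeasurable ((hp.sub hph).mul (hz a)).aestronglyMeasurable).symm
    have step3 : ⟪(MemLp.toLp _ hfp : Lp ℝ 2 (P.map X)), e a⟫
        = ∫ s, (p s - ph s) * z s a ∂(P.map X) := by
      rw [L2.inner_def]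
      refine integral_congr_ae ?_
      filter_upwards [MemLp.coeFn_toLp hfp, MemLp.coeFn_toLp (hzL a)] with s h1 h2
      simp [he, h1, h2, RCLike.inner_apply, mul_comm]
    exact step1.trans (step2.trans step3.symm)
  have hnormb : ‖(K.orthogonalProjectionOnto (MemLp.toLp _ hfb) : Lp ℝ 2 (P.map X))‖ ^ 2
      = ∑ a, ∑ c, v a * G⁻¹ a c * v c :=
    proj_norm_sq e _ G hGe hGinv K hK v hva
  have hnormp : ‖(K.orthogonalProjectionOnto (MemLp.toLp _ hfp) : Lp ℝ 2 (P.map X))‖ ^ 2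
      = ∑ a, ∑ c, w a * G⁻¹ a c * w c :=
    proj_norm_sq e _ G hGe hGinv K hK w hwa
  constructor
  · rw [(main 4 0 1 2 3 (by decide) (by decide) (by decide) (by decide) (by decide)
      (by decide)).2, hnormb, hnormp]
  · intro n hn
    rw [MeasureTheory.integral_const_mul]
    have hval : ∀ i₁ i₂ i₃ i₄ : Fin n,
        (∫ ω : Fin n → Ω,
          (if i₁ ≠ i₂ ∧ i₁ ≠ i₃ ∧ i₁ ≠ i₄ ∧ i₂ ≠ i₃ ∧ i₂ ≠ i₄ ∧ i₃ ≠ i₄ then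
            (Y (ω i₁) - bh (X (ω i₁))) *
              (∑ a, ∑ c, z (X (ω i₁)) a * G⁻¹ a c * z (X (ω i₂)) c) *
              (Y (ω i₂) - bh (X (ω i₂))) *
              ((A (ω i₃) - ph (X (ω i₃))) *
                (∑ a, ∑ c, z (X (ω i₃)) a * G⁻¹ a c * z (X (ω i₄)) c) *
                (A (ω i₄) - ph (X (ω i₄))))
          else 0) ∂(Measure.pi fun _ : Fin n => P))
          = (if i₁ ≠ i₂ ∧ i₁ ≠ i₃ ∧ i₁ ≠ i₄ ∧ i₂ ≠ i₃ ∧ i₂ ≠ i₄ ∧ i₃ ≠ i₄ then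
              (∑ a, ∑ c, v a * G⁻¹ a c * v c) * (∑ a, ∑ c, w a * G⁻¹ a c * w c) else 0) := by
      intro i₁ i₂ i₃ i₄
      by_cases hd : i₁ ≠ i₂ ∧ i₁ ≠ i₃ ∧ i₁ ≠ i₄ ∧ i₂ ≠ i₃ ∧ i₂ ≠ i₄ ∧ i₃ ≠ i₄
      · simp only [if_pos hd]
        exact (main n i₁ i₂ i₃ i₄ hd.1 hd.2.1 hd.2.2.1 hd.2.2.2.1 hd.2.2.2.2.1 hd.2.2.2.2.2).2
      · simp only [if_neg hd, integral_zero]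
    have hIi : ∀ i₁ i₂ i₃ i₄ : Fin n,
        Integrable (fun ω : Fin n → Ω =>
          if i₁ ≠ i₂ ∧ i₁ ≠ i₃ ∧ i₁ ≠ i₄ ∧ i₂ ≠ i₃ ∧ i₂ ≠ i₄ ∧ i₃ ≠ i₄ then
            (Y (ω i₁) - bh (X (ω i₁))) *
              (∑ a, ∑ c, z (X (ω i₁)) a * G⁻¹ a c * z (X (ω i₂)) c) *
              (Y (ω i₂) - bh (X (ω i₂))) *
              ((A (ω i₃) - ph (X (ω i₃))) *
                (∑ a, ∑ c, z (X (ω i₃)) a * G⁻¹ a c * z (X (ω i₄)) c) *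
                (A (ω i₄) - ph (X (ω i₄))))
          else 0) (Measure.pi fun _ : Fin n => P) := by
      intro i₁ i₂ i₃ i₄
      by_cases hd : i₁ ≠ i₂ ∧ i₁ ≠ i₃ ∧ i₁ ≠ i₄ ∧ i₂ ≠ i₃ ∧ i₂ ≠ i₄ ∧ i₃ ≠ i₄
      · simp only [if_pos hd]
        exact (main n i₁ i₂ i₃ i₄ hd.1 hd.2.1 hd.2.2.1 hd.2.2.2.1 hd.2.2.2.2.1 hd.2.2.2.2.2).1
      · simp only [if_neg hd]
        exact integrable_zero _ _ _
    rw [integral_finset_sum _ fun i₁ _ => integrable_finset_sum _ fun i₂ _ =>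
      integrable_finset_sum _ fun i₃ _ => integrable_finset_sum _ fun i₄ _ => hIi i₁ i₂ i₃ i₄]
    have push : (∑ i₁ : Fin n, ∫ ω : Fin n → Ω, ∑ i₂ : Fin n, ∑ i₃ : Fin n, ∑ i₄ : Fin n,
        (if i₁ ≠ i₂ ∧ i₁ ≠ i₃ ∧ i₁ ≠ i₄ ∧ i₂ ≠ i₃ ∧ i₂ ≠ i₄ ∧ i₃ ≠ i₄ then
            (Y (ω i₁) - bh (X (ω i₁))) *
              (∑ a, ∑ c, z (X (ω i₁)) a * G⁻¹ a c * z (X (ω i₂)) c) *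
              (Y (ω i₂) - bh (X (ω i₂))) *
              ((A (ω i₃) - ph (X (ω i₃))) *
                (∑ a, ∑ c, z (X (ω i₃)) a * G⁻¹ a c * z (X (ω i₄)) c) *
                (A (ω i₄) - ph (X (ω i₄))))
          else 0) ∂(Measure.pi fun _ : Fin n => P))
        = ∑ i₁ : Fin n, ∑ i₂ : Fin n, ∑ i₃ : Fin n, ∑ i₄ : Fin n,
            (if i₁ ≠ i₂ ∧ i₁ ≠ i₃ ∧ i₁ ≠ i₄ ∧ i₂ ≠ i₃ ∧ i₂ ≠ i₄ ∧ i₃ ≠ i₄ then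
              (∑ a, ∑ c, v a * G⁻¹ a c * v c) * (∑ a, ∑ c, w a * G⁻¹ a c * w c) else 0) := by
      refine Finset.sum_congr rfl fun i₁ _ => ?_
      rw [integral_finset_sum _ fun i₂ _ => integrable_finset_sum _ fun i₃ _ =>
        integrable_finset_sum _ fun i₄ _ => hIi i₁ i₂ i₃ i₄]
      refine Finset.sum_congr rfl fun i₂ _ => ?_
      rw [integral_finset_sum _ fun i₃ _ => integrable_finset_sum _ fun i₄ _ => hIi i₁ i₂ i₃ i₄]
      refine Finset.sum_congr rfl fun i₃ _ => ?_
      rw [integral_finset_sum _ fun i₄ _ => hIi i₁ i₂ i₃ i₄]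
      exact Finset.sum_congr rfl fun i₄ _ => hval i₁ i₂ i₃ i₄
    rw [push, count_sum, ← hnormb, ← hnormp]
    have hfac : (n * (n - 1) * (n - 2) * (n - 3)) * (n - 4).factorial = n.factorial := by
      obtain ⟨m, rfl⟩ : ∃ m, n = m + 4 := ⟨n - 4, by omega⟩
      rw [show m + 4 - 1 = m + 3 from by omega, show m + 4 - 2 = m + 2 from by omega,
        show m + 4 - 3 = m + 1 from by omega, show m + 4 - 4 = m from by omega]
      rw [show (m + 4).factorial = (m + 4) * (m + 3) * (m + 2) * (m + 1) * m.factorial from by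
        rw [show m + 4 = (m + 3) + 1 from rfl, Nat.factorial_succ,
          show m + 3 = (m + 2) + 1 from rfl, Nat.factorial_succ,
          show m + 2 = (m + 1) + 1 from rfl, Nat.factorial_succ, Nat.factorial_succ]
        ring]
    have hN0 : ((n * (n - 1) * (n - 2) * (n - 3) : ℕ) : ℝ) ≠ 0 := by
      have : n * (n - 1) * (n - 2) * (n - 3) ≠ 0 := by
        have h1 : n ≠ 0 := by omega
        have h2 : n - 1 ≠ 0 := by omega
        have h3 : n - 2 ≠ 0 := by omega
        have h4 : n - 3 ≠ 0 := by omega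
        positivity
      exact Nat.cast_ne_zero.mpr this
    have hf0 : ((n - 4).factorial : ℝ) ≠ 0 := Nat.cast_ne_zero.mpr (Nat.factorial_ne_zero _)
    have hcast : (n.factorial : ℝ)
        = ((n * (n - 1) * (n - 2) * (n - 3) : ℕ) : ℝ) * ((n - 4).factorial : ℝ) := by
      exact_mod_cast hfac.symm
    rw [hcast]
    have harith : ∀ a b x : ℝ, a ≠ 0 → b ≠ 0 → a / (b * a) * (b * x) = x := by
      intro a b x ha hb
      field_simp
    exact harith _ _ _ hf0 hN0
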